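/- arXiv:1507.02380 — 2 statements merged into one kernel-verified Lean document; each statement's English description precedes it below -/
import Mathlib

section
/- If B ∈ {0,1}^{m×n} with two-class column labels satisfies J(B) = m (where J is the margin criterion with J(B) ≤ m), then (a) all columns within each class are equal, and (b) any two columns from different classes are orthogonal as vectors in ℝ^m, i.e., b_iᵀ b_j = 0 whenever c_i ≠ c_j. -/
open Finset

/-- `‖v‖₀`: number of nonzero entries of a vector. -/
noncomputable def l0 {m : ℕ} (v : Fin m → ℝ) : ℕ := (univ.filter fun k => v k ≠ 0).card

lemma l0_le {m : ℕ} (v : Fin m → ℝ) : l0 v ≤ m := by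
  simpa [l0] using (Finset.card_filter_le univ fun k => v k ≠ 0)

lemma l0_eq_zero {m : ℕ} {v : Fin m → ℝ} (h : l0 v = 0) : v = 0 := by
  funext k
  by_contra hk
  simp only [Pi.zero_apply] at hk
  simp [l0, Finset.card_eq_zero] at h
  exact hk (@h k)

lemma l0_eq_m {m : ℕ} {v : Fin m → ℝ} (h : l0 v = m) (k : Fin m) : v k ≠ 0 := by
  have : (univ.filter fun k => v k ≠ 0) = univ :=
    Finset.eq_univ_of_card _ (by simpa [l0] using h)
  have := (Finset.eq_univ_iff_forall.mp this) k
  simpa using this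

/-- Proposition 2: if the margin criterion attains its maximum `J(B) = m`, then
(a) all columns within each class are equal, and (b) columns from different classes
are orthogonal. -/
theorem J_eq_m_implies {m n : ℕ} (b : Fin n → Fin m → ℝ)
    (hb : ∀ j k, b j k = 0 ∨ b j k = 1) (c : Fin n → Fin 2)
    (μ₁ μ₂ : ℕ)
    (hμ₁ : μ₁ = (univ.filter fun p : Fin n × Fin n => c p.1 ≠ c p.2).card)
    (hμ₂ : μ₂ = (univ.filter fun p : Fin n × Fin n => c p.1 = c p.2 ∧ p.1 ≠ p.2).card)
    (hμ₁pos : 0 < μ₁) (hμ₂pos : 0 < μ₂)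
    (hJ : (1 / (μ₁ : ℝ)) * ∑ i, ∑ j, (if c i ≠ c j then (l0 (b i - b j) : ℝ) else 0) -
      (1 / (μ₂ : ℝ)) * ∑ i, ∑ j, (if c i = c j then (l0 (b i - b j) : ℝ) else 0) = m) :
    (∀ i j, c i = c j → b i = b j) ∧
      (∀ i j, c i ≠ c j → ∑ k, b i k * b j k = 0) := by
  set A₁ : Finset (Fin n × Fin n) := univ.filter fun p => c p.1 ≠ c p.2 with hA₁
  set A₂ : Finset (Fin n × Fin n) := univ.filter fun p => c p.1 = c p.2 with hA₂
  set N₁ : ℕ := ∑ p ∈ A₁, l0 (b p.1 - b p.2) with hN₁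
  set N₂ : ℕ := ∑ p ∈ A₂, l0 (b p.1 - b p.2) with hN₂
  -- rewrite the real sums
  have hs₁ : ∑ i, ∑ j, (if c i ≠ c j then (l0 (b i - b j) : ℝ) else 0) = (N₁ : ℝ) := by
    rw [← Finset.sum_product']
    rw [hN₁, hA₁, Finset.sum_filter, Nat.cast_sum]
    simp [Finset.univ_product_univ, apply_ite (Nat.cast : ℕ → ℝ)]
  have hs₂ : ∑ i, ∑ j, (if c i = c j then (l0 (b i - b j) : ℝ) else 0) = (N₂ : ℝ) := by
    rw [← Finset.sum_product']
    rw [hN₂, hA₂, Finset.sum_filter, Nat.cast_sum]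
    simp [Finset.univ_product_univ, apply_ite (Nat.cast : ℕ → ℝ)]
  rw [hs₁, hs₂] at hJ
  have hμ₁' : (0:ℝ) < μ₁ := by exact_mod_cast hμ₁pos
  have hμ₂' : (0:ℝ) < μ₂ := by exact_mod_cast hμ₂pos
  have hN₁le : N₁ ≤ μ₁ * m := by
    rw [hμ₁]
    calc N₁ ≤ ∑ _p ∈ A₁, m := Finset.sum_le_sum fun p _ => l0_le _
    _ = A₁.card * m := by simp [Finset.sum_const, mul_comm]
  have hN₁le' : (N₁ : ℝ) / μ₁ ≤ m := by
    rw [div_le_iff₀ hμ₁']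
    calc (N₁:ℝ) ≤ (μ₁ * m : ℕ) := by exact_mod_cast hN₁le
    _ = (m:ℝ) * μ₁ := by push_cast; ring
  have hN₂nn : (0:ℝ) ≤ (N₂ : ℝ) / μ₂ := by positivity
  have key : (N₂ : ℝ) / μ₂ = (N₁ : ℝ) / μ₁ - m := by
    field_simp at hJ ⊢; linarith
  have hN₂0 : N₂ = 0 := by
    have h1 : (N₂ : ℝ) / μ₂ ≤ 0 := by rw [key]; linarith
    have h2 := le_antisymm h1 hN₂nn
    field_simp at h2
    exact_mod_cast h2
  have hN₁eq : N₁ = μ₁ * m := by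
    have : (N₁ : ℝ) / μ₁ = m := by
      have : (N₂ : ℝ) / μ₂ = 0 := by rw [hN₂0]; simp
      rw [this] at key; linarith
    have : (N₁ : ℝ) = μ₁ * m := by field_simp at this; linarith
    exact_mod_cast this
  -- each intra term is zero
  have intra : ∀ i j, c i = c j → b i = b j := by
    intro i j hc
    have hmem : (i, j) ∈ A₂ := by simp [hA₂, hc]
    have := (Finset.sum_eq_zero_iff.mp (hN₂ ▸ hN₂0)) (i, j) hmem
    have := l0_eq_zero this
    have : b i - b j = 0 := this
    funext k
    have := congrFun this k
    simp at this
    linarith [this]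
  refine ⟨intra, ?_⟩
  -- each inter term is m
  have inter : ∀ p ∈ A₁, l0 (b p.1 - b p.2) = m := by
    have hcard : A₁.card = μ₁ := hμ₁.symm
    have hsum : ∑ p ∈ A₁, l0 (b p.1 - b p.2) = ∑ _p ∈ A₁, m := by
      rw [← hN₁, hN₁eq, Finset.sum_const, smul_eq_mul, hcard]
    exact fun p hp => ((Finset.sum_eq_sum_iff_of_le
      (fun p _ => l0_le (b p.1 - b p.2))).mp hsum) p hp
  intro i j hc
  have hmem : (i, j) ∈ A₁ := by simp [hA₁, hc]
  have hm := inter (i, j) hmem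
  apply Finset.sum_eq_zero
  intro k _
  have hne : b i k - b j k ≠ 0 := by
    have := l0_eq_m hm k
    simpa using this
  rcases hb i k with h1 | h1 <;> rcases hb j k with h2 | h2 <;>
    simp [h1, h2] at hne ⊢
end

section
/- For the two-class criterion J(B) = (1/μ₁) Σ_{c_i≠c_j} d_H(b_i,b_j) − (1/μ₂) Σ_{c_i=c_j} d_H(b_i,b_j) on B ∈ {0,1}^{m×n}: J(B) = m holds if and only if all intra-class column pairs are identical and all inter-class column pairs are at Hamming distance exactly m. -/
open Finset

lemma l0_eq_zero_iff {m : ℕ} (v : Fin m → ℝ) : l0 v = 0 ↔ v = 0 := by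
  simp [l0, card_eq_zero, filter_eq_empty_iff, funext_iff]

lemma sum_all_eq {α : Type*} {s : Finset α} {f : α → ℕ} {m : ℕ}
    (h : ∀ x ∈ s, f x ≤ m) (hs : ∑ x ∈ s, f x = s.card * m) : ∀ x ∈ s, f x = m := by
  by_contra hc
  push_neg at hc
  obtain ⟨x, hx, hne⟩ := hc
  have hlt : ∑ x ∈ s, f x < ∑ _x ∈ s, m :=
    Finset.sum_lt_sum h ⟨x, hx, lt_of_le_of_ne (h x hx) hne⟩
  rw [Finset.sum_const, smul_eq_mul, hs] at hlt
  exact lt_irrefl _ hlt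

/-- Equivalence characterizing the optimal two-class ordinal matrix: `J(B) = m` iff all
intra-class column pairs are identical and all inter-class column pairs are at Hamming
distance exactly `m`. -/
theorem J_eq_m_iff {m n : ℕ} (b : Fin n → Fin m → ℝ)
    (hb : ∀ j k, b j k = 0 ∨ b j k = 1) (c : Fin n → Fin 2)
    (μ₁ μ₂ : ℕ)
    (hμ₁ : μ₁ = (univ.filter fun p : Fin n × Fin n => c p.1 ≠ c p.2).card)
    (hμ₂ : μ₂ = (univ.filter fun p : Fin n × Fin n => c p.1 = c p.2 ∧ p.1 ≠ p.2).card)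
    (hμ₁pos : 0 < μ₁) (hμ₂pos : 0 < μ₂) :
    ((1 / (μ₁ : ℝ)) * ∑ i, ∑ j, (if c i ≠ c j then (l0 (b i - b j) : ℝ) else 0) -
        (1 / (μ₂ : ℝ)) * ∑ i, ∑ j, (if c i = c j then (l0 (b i - b j) : ℝ) else 0) = m)
      ↔ ((∀ i j, c i = c j → b i = b j) ∧ (∀ i j, c i ≠ c j → l0 (b i - b j) = m)) := by
  set s₁ := univ.filter fun p : Fin n × Fin n => c p.1 ≠ c p.2 with hs₁
  set s₂ := univ.filter fun p : Fin n × Fin n => c p.1 = c p.2 with hs₂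
  have hμ₁' : (μ₁ : ℝ) ≠ 0 := Nat.cast_ne_zero.mpr hμ₁pos.ne'
  have hμ₂' : (μ₂ : ℝ) ≠ 0 := Nat.cast_ne_zero.mpr hμ₂pos.ne'
  have hS₁ : (∑ i, ∑ j, (if c i ≠ c j then (l0 (b i - b j) : ℝ) else 0)) =
      ((∑ p ∈ s₁, l0 (b p.1 - b p.2) : ℕ) : ℝ) := by
    push_cast
    rw [← Fintype.sum_prod_type']
    rw [Finset.sum_filter]
  have hS₂ : (∑ i, ∑ j, (if c i = c j then (l0 (b i - b j) : ℝ) else 0)) =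
      ((∑ p ∈ s₂, l0 (b p.1 - b p.2) : ℕ) : ℝ) := by
    push_cast
    rw [← Fintype.sum_prod_type']
    rw [Finset.sum_filter]
  rw [hS₁, hS₂]
  set A := ∑ p ∈ s₁, l0 (b p.1 - b p.2) with hA
  set B := ∑ p ∈ s₂, l0 (b p.1 - b p.2) with hB
  have hAle : A ≤ μ₁ * m := by
    rw [hμ₁]
    calc A ≤ ∑ _p ∈ s₁, m := Finset.sum_le_sum fun p _ => l0_le _
    _ = s₁.card * m := by rw [Finset.sum_const, smul_eq_mul]
  constructor
  · intro hJ
    -- From hJ and A ≤ μ₁ m, B ≥ 0, deduce A = μ₁ m and B = 0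
    have h1 : (1 / (μ₁ : ℝ)) * A ≤ m := by
      rw [one_div, inv_mul_le_iff₀ (by positivity)]
      calc (A : ℝ) ≤ ((μ₁ * m : ℕ) : ℝ) := Nat.cast_le.mpr hAle
      _ = (m : ℝ) * μ₁ := by push_cast; ring
      _ ≤ (μ₁ : ℝ) * m := le_of_eq (by ring)
    have h2 : (0 : ℝ) ≤ (1 / (μ₂ : ℝ)) * B := by positivity
    have hBeq : (1 / (μ₂ : ℝ)) * B = 0 := by
      nlinarith [hJ, h1, h2]
    have hB0 : B = 0 := by
      have : (B : ℝ) = 0 := by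
        field_simp at hBeq
        exact_mod_cast hBeq
      exact_mod_cast this
    have hAeq : A = μ₁ * m := by
      have : (1 / (μ₁ : ℝ)) * A = m := by linarith [hJ, hBeq]
      have hA' : (A : ℝ) = (μ₁ : ℝ) * m := by
        field_simp at this
        linarith [this]
      exact_mod_cast hA'
    constructor
    · intro i j hc
      have hmem : (i, j) ∈ s₂ := by simp [hs₂, hc]
      have := Finset.sum_eq_zero_iff.mp hB0 (i, j) hmem
      have hv : b i - b j = 0 := (l0_eq_zero_iff _).mp this
      have := sub_eq_zero.mp hv
      exact this
    · intro i j hc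
      have hmem : (i, j) ∈ s₁ := by simp [hs₁, hc]
      have := sum_all_eq (f := fun p : Fin n × Fin n => l0 (b p.1 - b p.2))
        (fun p _ => l0_le _) (by rw [← hA, hAeq, hμ₁]) (i, j) hmem
      exact this
  · rintro ⟨h1, h2⟩
    have hB0 : B = 0 := by
      apply Finset.sum_eq_zero
      intro p hp
      have : c p.1 = c p.2 := by simpa [hs₂] using hp
      rw [(l0_eq_zero_iff _).mpr (sub_eq_zero.mpr (h1 _ _ this))]
    have hAeq : A = μ₁ * m := by
      rw [hA]
      calc ∑ p ∈ s₁, l0 (b p.1 - b p.2) = ∑ p ∈ s₁, m := by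
            apply Finset.sum_congr rfl
            intro p hp
            exact h2 _ _ (by simpa [hs₁] using hp)
      _ = μ₁ * m := by rw [Finset.sum_const, smul_eq_mul, hμ₁]
    rw [hB0, hAeq]
    push_cast
    field_simp
    ring
end
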